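/- Let δ > 0 and let ψ: ℕ → ℝ_{>0} satisfy ψ(k+1) ≥ (1+δ)ψ(k) and suppose for all k ≠ j, ψ taking the role of a length satisfies b(k,j) ≥ δ max(ψ(k), ψ(j)) where b(k,j) ≥ |ψ(k) − ψ(j)|. Then for every t > 0, sup_j ∑_k e^{-t·b(k,j)}(1 − e^{-tψ(k)})(1 − e^{-tψ(j)}) ≤ C_δ for a constant C_δ depending only on δ. -/

import Mathlib

/-- Geometric sum over a finset via an injective exponent map. -/
private lemma geom_finset_bound (r : ℝ) (h0 : 0 ≤ r) (h1 : r < 1) (s : Finset ℕ)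
    (f : ℕ → ℕ) (hinj : ∀ x ∈ s, ∀ y ∈ s, f x = f y → x = y) :
    ∑ k ∈ s, r ^ f k ≤ (1 - r)⁻¹ := by
  calc ∑ k ∈ s, r ^ f k = ∑ m ∈ s.image f, r ^ m := (Finset.sum_image hinj).symm
    _ ≤ ∑' m, r ^ m := Summable.sum_le_tsum _ (fun i _ => pow_nonneg h0 i)
        (summable_geometric_of_lt_one h0 h1)
    _ = (1 - r)⁻¹ := tsum_geometric_of_lt_one h0 h1

private lemma grow_pow (δ : ℝ) (ψ : ℕ → ℝ)
    (hgrow : ∀ k, (1 + δ) * ψ k ≤ ψ (k + 1)) (hδ : 0 < δ) (hψ : ∀ k, 0 < ψ k) :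
    ∀ k m, (1 + δ) ^ m * ψ k ≤ ψ (k + m) := by
  intro k m
  induction m with
  | zero => simp
  | succ n ih =>
    have h1 : (1 + δ) ^ (n + 1) * ψ k = (1 + δ) * ((1 + δ) ^ n * ψ k) := by ring
    have h2 : (1 + δ) * ((1 + δ) ^ n * ψ k) ≤ (1 + δ) * ψ (k + n) := by
      apply mul_le_mul_of_nonneg_left ih (by linarith)
    have h3 := hgrow (k + n)
    rw [h1]
    calc (1 + δ) * ((1 + δ) ^ n * ψ k) ≤ (1 + δ) * ψ (k + n) := h2
      _ ≤ ψ (k + n + 1) := h3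
      _ = ψ (k + (n + 1)) := by ring_nf

/-- Sum over indices with `t ψ k ≤ 1` is at most `(1+δ)/δ`. -/
private lemma sum_small (δ t : ℝ) (hδ : 0 < δ) (ht : 0 < t) (ψ : ℕ → ℝ)
    (hψ : ∀ k, 0 < ψ k) (hgrow : ∀ k, (1 + δ) * ψ k ≤ ψ (k + 1))
    (s : Finset ℕ) (hs : ∀ k ∈ s, t * ψ k ≤ 1) :
    ∑ k ∈ s, t * ψ k ≤ (1 + δ) / δ := by
  rcases s.eq_empty_or_nonempty with rfl | hne
  · simp; positivity
  · set K := s.max' hne with hK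
    have hr0 : (0:ℝ) ≤ (1 + δ)⁻¹ := by positivity
    have hr1 : (1 + δ)⁻¹ < 1 := by
      rw [inv_lt_one_iff₀]; right; linarith
    have key : ∀ k ∈ s, t * ψ k ≤ ((1 + δ)⁻¹) ^ (K - k) := by
      intro k hk
      have hkK : k ≤ K := s.le_max' k hk
      have h1 : (1 + δ) ^ (K - k) * ψ k ≤ ψ K := by
        have := grow_pow δ ψ hgrow hδ hψ k (K - k)
        rwa [Nat.add_sub_cancel' hkK] at this
      have hψK : t * ψ K ≤ 1 := hs K (s.max'_mem hne)
      have hpos : (0:ℝ) < (1 + δ) ^ (K - k) := by positivity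
      have h2 : t * ((1 + δ) ^ (K - k) * ψ k) ≤ 1 := by
        calc t * ((1 + δ) ^ (K - k) * ψ k) ≤ t * ψ K := by
              apply mul_le_mul_of_nonneg_left h1 ht.le
          _ ≤ 1 := hψK
      rw [inv_pow]
      have hmul : t * ψ k * (1 + δ) ^ (K - k)
          ≤ ((1 + δ) ^ (K - k))⁻¹ * (1 + δ) ^ (K - k) := by
        rw [inv_mul_cancel₀ hpos.ne']
        calc t * ψ k * (1 + δ) ^ (K - k) = t * ((1 + δ) ^ (K - k) * ψ k) := by ring
          _ ≤ 1 := h2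
      exact le_of_mul_le_mul_right hmul hpos
    calc ∑ k ∈ s, t * ψ k ≤ ∑ k ∈ s, ((1 + δ)⁻¹) ^ (K - k) := Finset.sum_le_sum key
      _ ≤ (1 - (1 + δ)⁻¹)⁻¹ := by
          apply geom_finset_bound _ hr0 hr1
          intro x hx y hy hxy
          have hxK : x ≤ K := s.le_max' x hx
          have hyK : y ≤ K := s.le_max' y hy
          omega
      _ = (1 + δ) / δ := by
          rw [show (1:ℝ) - (1 + δ)⁻¹ = δ / (1 + δ) by field_simp; ring]
          rw [inv_div]

/-- Sum over indices with `1 ≤ t ψ k` is at most `(1 - e^{-δ²})⁻¹`. -/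
private lemma sum_big (δ t : ℝ) (hδ : 0 < δ) (ht : 0 < t) (ψ : ℕ → ℝ)
    (hψ : ∀ k, 0 < ψ k) (hgrow : ∀ k, (1 + δ) * ψ k ≤ ψ (k + 1))
    (s : Finset ℕ) (hs : ∀ k ∈ s, 1 ≤ t * ψ k) :
    ∑ k ∈ s, Real.exp (-(δ * (t * ψ k))) ≤ (1 - Real.exp (-δ ^ 2))⁻¹ := by
  have he0 : (0:ℝ) ≤ Real.exp (-δ ^ 2) := (Real.exp_pos _).le
  have he1 : Real.exp (-δ ^ 2) < 1 := by
    rw [Real.exp_lt_one_iff]; nlinarith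
  rcases s.eq_empty_or_nonempty with rfl | hne
  · simp; positivity
  · set L := s.min' hne with hL
    have key : ∀ k ∈ s, Real.exp (-(δ * (t * ψ k))) ≤ (Real.exp (-δ ^ 2)) ^ (k - L) := by
      intro k hk
      have hLk : L ≤ k := s.min'_le k hk
      have h1 : (1 + δ) ^ (k - L) * ψ L ≤ ψ k := by
        have := grow_pow δ ψ hgrow hδ hψ L (k - L)
        rwa [Nat.add_sub_cancel' hLk] at this
      have hψL : 1 ≤ t * ψ L := hs L (s.min'_mem hne)
      have h2 : ((k : ℝ) - L) * δ ≤ t * ψ k := by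
        have hb : 1 + ((k - L : ℕ) : ℝ) * δ ≤ (1 + δ) ^ (k - L) :=
          one_add_mul_le_pow (by linarith) (k - L)
        have h3 : (1 + δ) ^ (k - L) ≤ (1 + δ) ^ (k - L) * (t * ψ L) := by
          nlinarith [pow_pos (show (0:ℝ) < 1 + δ by linarith) (k - L)]
        have h4 : (1 + δ) ^ (k - L) * (t * ψ L) ≤ t * ψ k := by
          calc (1 + δ) ^ (k - L) * (t * ψ L) = t * ((1 + δ) ^ (k - L) * ψ L) := by ring
            _ ≤ t * ψ k := mul_le_mul_of_nonneg_left h1 ht.le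
        have hcast : ((k - L : ℕ) : ℝ) = (k : ℝ) - L := by
          push_cast [Nat.cast_sub hLk]; ring
        nlinarith [hb, h3, h4]
      rw [← Real.exp_nat_mul]
      apply Real.exp_le_exp.mpr
      have hcast : ((k - L : ℕ) : ℝ) = (k : ℝ) - L := by
        push_cast [Nat.cast_sub hLk]; ring
      rw [hcast]
      nlinarith [h2]
    calc ∑ k ∈ s, Real.exp (-(δ * (t * ψ k)))
        ≤ ∑ k ∈ s, (Real.exp (-δ ^ 2)) ^ (k - L) := Finset.sum_le_sum key
      _ ≤ (1 - Real.exp (-δ ^ 2))⁻¹ := by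
          apply geom_finset_bound _ he0 he1
          intro x hx y hy hxy
          have hxL : L ≤ x := s.min'_le x hx
          have hyL : L ≤ y := s.min'_le y hy
          omega

/-- the key kernel estimate in the BMO bound for lacunary
Fourier series.  For a lacunary sequence ψ with ratio 1+δ and a symbol
b(k,j) ≥ δ·max(ψ k, ψ j) (for k ≠ j) satisfying b(k,j) ≥ |ψ k − ψ j|, the
row sums of e^{-t b(k,j)}(1−e^{-tψ k})(1−e^{-tψ j}) are bounded uniformly in
t by a constant depending only on δ. -/
theorem bmo_kernel_row_sums_bounded (δ : ℝ) (hδ : 0 < δ) :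
    ∃ C : ℝ, ∀ (ψ : ℕ → ℝ) (b : ℕ → ℕ → ℝ),
      (∀ k, 0 < ψ k) → (∀ k, (1 + δ) * ψ k ≤ ψ (k + 1)) →
      (∀ k j, k ≠ j → δ * max (ψ k) (ψ j) ≤ b k j) →
      (∀ k j, |ψ k - ψ j| ≤ b k j) →
      ∀ t : ℝ, 0 < t → ∀ j : ℕ,
        ∑' k : ℕ, Real.exp (-(t * b k j)) * (1 - Real.exp (-(t * ψ k)))
            * (1 - Real.exp (-(t * ψ j))) ≤ C := by
  have he1 : Real.exp (-δ ^ 2) < 1 := by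
    rw [Real.exp_lt_one_iff]; nlinarith
  refine ⟨1 + (1 + δ) / δ + (1 - Real.exp (-δ ^ 2))⁻¹, ?_⟩
  intro ψ b hψ hgrow hmax habs t ht j
  have hC : (0:ℝ) ≤ 1 + (1 + δ) / δ + (1 - Real.exp (-δ ^ 2))⁻¹ := by
    have : (0:ℝ) < 1 - Real.exp (-δ ^ 2) := by linarith
    positivity
  apply tsum_le_of_sum_le' hC
  intro s
  -- pointwise bound by g
  set g : ℕ → ℝ := fun k =>
    if k = j then 1 else if t * ψ k ≤ 1 then t * ψ k
      else Real.exp (-(δ * (t * ψ k))) with hg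
  have hb_nonneg : ∀ k, 0 ≤ b k j := fun k => le_trans (abs_nonneg _) (habs k j)
  have hfac : ∀ x : ℕ, 0 ≤ 1 - Real.exp (-(t * ψ x)) ∧ 1 - Real.exp (-(t * ψ x)) ≤ 1 := by
    intro x
    constructor
    · have : Real.exp (-(t * ψ x)) ≤ 1 := by
        rw [Real.exp_le_one_iff]
        have := hψ x; nlinarith
      linarith
    · have := (Real.exp_pos (-(t * ψ x))).le; linarith
  have hexp_le_one : ∀ k, Real.exp (-(t * b k j)) ≤ 1 := by
    intro k
    rw [Real.exp_le_one_iff]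
    have := hb_nonneg k; nlinarith
  have hpt : ∀ k, Real.exp (-(t * b k j)) * (1 - Real.exp (-(t * ψ k)))
      * (1 - Real.exp (-(t * ψ j))) ≤ g k := by
    intro k
    have h1 := hfac k
    have h2 := hfac j
    have hE := hexp_le_one k
    have hEpos := (Real.exp_pos (-(t * b k j))).le
    by_cases hkj : k = j
    · simp only [hg, hkj, if_pos rfl]
      calc Real.exp (-(t * b j j)) * (1 - Real.exp (-(t * ψ j)))
            * (1 - Real.exp (-(t * ψ j)))
          ≤ 1 * 1 * 1 := by
            apply mul_le_mul (mul_le_mul (hexp_le_one j) h2.2 h2.1 (by linarith [hexp_le_one j]))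
              h2.2 h2.1 (by norm_num)
        _ = 1 := by norm_num
    · simp only [hg, if_neg hkj]
      by_cases hsm : t * ψ k ≤ 1
      · rw [if_pos hsm]
        have hle : 1 - Real.exp (-(t * ψ k)) ≤ t * ψ k := by
          have := Real.add_one_le_exp (-(t * ψ k)); linarith
        have htψ : 0 ≤ t * ψ k := by have := hψ k; positivity
        calc Real.exp (-(t * b k j)) * (1 - Real.exp (-(t * ψ k)))
              * (1 - Real.exp (-(t * ψ j)))
            ≤ 1 * (t * ψ k) * 1 := by
              apply mul_le_mul (mul_le_mul hE hle h1.1 (by norm_num)) h2.2 h2.1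
              positivity
          _ = t * ψ k := by ring
      · rw [if_neg hsm]
        have hbk : δ * ψ k ≤ b k j := by
          have := hmax k j hkj
          have : δ * ψ k ≤ δ * max (ψ k) (ψ j) := by
            apply mul_le_mul_of_nonneg_left (le_max_left _ _) hδ.le
          linarith [hmax k j hkj]
        have hE2 : Real.exp (-(t * b k j)) ≤ Real.exp (-(δ * (t * ψ k))) := by
          apply Real.exp_le_exp.mpr
          nlinarith
        calc Real.exp (-(t * b k j)) * (1 - Real.exp (-(t * ψ k)))
              * (1 - Real.exp (-(t * ψ j)))
            ≤ Real.exp (-(t * b k j)) * 1 * 1 := by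
              apply mul_le_mul (mul_le_mul le_rfl h1.2 h1.1 hEpos) h2.2 h2.1
              positivity
          _ = Real.exp (-(t * b k j)) := by ring
          _ ≤ Real.exp (-(δ * (t * ψ k))) := hE2
  calc ∑ k ∈ s, Real.exp (-(t * b k j)) * (1 - Real.exp (-(t * ψ k)))
          * (1 - Real.exp (-(t * ψ j)))
      ≤ ∑ k ∈ s, g k := Finset.sum_le_sum fun k _ => hpt k
    _ ≤ 1 + (1 + δ) / δ + (1 - Real.exp (-δ ^ 2))⁻¹ := by
        rw [← Finset.sum_filter_add_sum_filter_not s (fun k => k = j)]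
        have hgnn : ∀ k, 0 ≤ g k := by
          intro k
          simp only [hg]
          split
          · norm_num
          · split
            · have := hψ k; positivity
            · positivity
        have hA : ∑ k ∈ s.filter (fun k => k = j), g k ≤ 1 := by
          have hsub : s.filter (fun k => k = j) ⊆ {j} := by
            intro x hx
            simp only [Finset.mem_filter] at hx
            simp [hx.2]
          calc ∑ k ∈ s.filter (fun k => k = j), g k
              ≤ ∑ k ∈ ({j} : Finset ℕ), g k :=
                Finset.sum_le_sum_of_subset_of_nonneg hsub (fun i _ _ => hgnn i)
            _ = g j := Finset.sum_singleton _ _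
            _ = 1 := by simp [hg]
        have hB : ∑ k ∈ s.filter (fun k => ¬ k = j), g k
            ≤ (1 + δ) / δ + (1 - Real.exp (-δ ^ 2))⁻¹ := by
          rw [← Finset.sum_filter_add_sum_filter_not (s.filter (fun k => ¬ k = j))
            (fun k => t * ψ k ≤ 1)]
          have hB1 : ∑ k ∈ (s.filter (fun k => ¬ k = j)).filter (fun k => t * ψ k ≤ 1), g k
              ≤ (1 + δ) / δ := by
            have heq : ∀ k ∈ (s.filter (fun k => ¬ k = j)).filter (fun k => t * ψ k ≤ 1),
                g k = t * ψ k := by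
              intro k hk
              simp only [Finset.mem_filter] at hk
              simp [hg, hk.1.2, hk.2]
            rw [Finset.sum_congr rfl heq]
            apply sum_small δ t hδ ht ψ hψ hgrow
            intro k hk
            simp only [Finset.mem_filter] at hk
            exact hk.2
          have hB2 : ∑ k ∈ (s.filter (fun k => ¬ k = j)).filter (fun k => ¬ t * ψ k ≤ 1), g k
              ≤ (1 - Real.exp (-δ ^ 2))⁻¹ := by
            have heq : ∀ k ∈ (s.filter (fun k => ¬ k = j)).filter (fun k => ¬ t * ψ k ≤ 1),
                g k = Real.exp (-(δ * (t * ψ k))) := by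
              intro k hk
              simp only [Finset.mem_filter] at hk
              simp [hg, hk.1.2, hk.2]
            rw [Finset.sum_congr rfl heq]
            apply sum_big δ t hδ ht ψ hψ hgrow
            intro k hk
            simp only [Finset.mem_filter] at hk
            linarith [hk.2]
          linarith
        linarith
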